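/- Suppose 0 = n₀ < n₁ < n₂ < … is a strictly increasing sequence of natural numbers and C_i ⊆ 2^{[n_i, n_{i+1})} (for i ∈ ℕ) are sets such that for all sequences s₀, …, s_{n_i} ∈ 2^{[n_i, n_{i+1})} both ⋂_{k ≤ n_i} (C_i + s_k) and ⋂_{k ≤ n_i} ((2^{[n_i, n_{i+1})} \ C_i) + s_k) are nonempty. Then the set H = {x ∈ 2^ω : for every i ∈ ℕ, the restriction x↾[n_i, n_{i+1}) belongs to C_i} does not belong to I₀; that is, H is not contained in any countable union of members of F₀. -/

import Mathlib

open Set MeasureTheory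

/-- The Cantor group `2^ω`: functions `ℕ → ZMod 2` with the product topology and
coordinatewise addition modulo 2. -/
abbrev CantorSp : Type := ℕ → ZMod 2

/-- The translate `B + x` of a set `B ⊆ 2^ω` by `x ∈ 2^ω`. -/
def cTranslate (B : Set CantorSp) (x : CantorSp) : Set CantorSp := (fun b => b + x) '' B

lemma zmod2_add_self : ∀ a : ZMod 2, a + a = 0 := by decide

lemma fun_add_add {ι : Type*} (x d : ι → ZMod 2) : x + d + d = x := by
  funext j
  show x j + d j + d j = x j
  rw [add_assoc, zmod2_add_self (d j), add_zero]

lemma cylinder_open (x : CantorSp) (N : ℕ) :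
    IsOpen {y : CantorSp | ∀ j < N, y j = x j} := by
  have h : {y : CantorSp | ∀ j < N, y j = x j} =
      ⋂ j : Fin N, (fun y : CantorSp => y j.1) ⁻¹' {x j.1} := by
    ext y
    simp only [Set.mem_setOf_eq, Set.mem_iInter, Set.mem_preimage, Set.mem_singleton_iff]
    exact ⟨fun h j => h j.1 j.2, fun h j hj => h ⟨j, hj⟩⟩
  rw [h]
  exact isOpen_iInter_of_finite fun j =>
    (continuous_apply (j : ℕ)).isOpen_preimage _ (isOpen_discrete _)

lemma perfect_diff (B P : Set CantorSp) (hP : Perfect P) (hne : P.Nonempty)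
    (hdisj : P.Pairwise fun x y => Disjoint (cTranslate B x) (cTranslate B y)) (M : ℕ) :
    ∃ d : CantorSp, (∀ j < M, d j = 0) ∧ ∀ z ∈ B, z + d ∉ B := by
  obtain ⟨p, hp⟩ := hne
  have hacc := (accPt_iff_nhds (x := p) (C := P)).mp (hP.acc p hp)
  have hV : {y : CantorSp | ∀ j < M, y j = p j} ∈ nhds p :=
    (cylinder_open p M).mem_nhds (fun j _ => rfl)
  obtain ⟨q, ⟨hqV, hqP⟩, hqp⟩ := hacc _ hV
  refine ⟨p + q, ?_, ?_⟩
  · intro j hj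
    show p j + q j = 0
    rw [hqV j hj]
    exact zmod2_add_self _
  · intro z hz hz'
    have hd := hdisj hp hqP (Ne.symm hqp)
    have h1 : z + p ∈ cTranslate B p := ⟨z, hz, rfl⟩
    have h2 : z + p ∈ cTranslate B q := by
      refine ⟨z + (p + q), hz', ?_⟩
      show z + (p + q) + q = z + p
      rw [← add_assoc z p q]
      exact fun_add_add (z + p) q
    exact Set.disjoint_left.mp hd h1 h2

/-- `F₀` : Borel sets `B ⊆ 2^ω` admitting a perfect (nonempty, closed, without
isolated points) set `P` of translations making `{B + x : x ∈ P}` disjoint. -/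
def memF0 (B : Set CantorSp) : Prop :=
  MeasurableSet[borel CantorSp] B ∧
    ∃ P : Set CantorSp, Perfect P ∧ P.Nonempty ∧
      P.Pairwise fun x y => Disjoint (cTranslate B x) (cTranslate B y)

/-- `I₀`, the σ-ideal generated by `F₀`: `E ∈ I₀` iff `E` is contained in a countable
union of members of `F₀`. -/
def memI0 (E : Set CantorSp) : Prop :=
  ∃ f : ℕ → Set CantorSp, (∀ n, memF0 (f n)) ∧ E ⊆ ⋃ n, f n

/-- If `0 = n₀ < n₁ < …` and the sets `Cᵢ ⊆ 2^{[nᵢ,nᵢ₊₁)}` are such that any `nᵢ + 1`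
translates of `Cᵢ` (and of its complement) have nonempty intersection, then the set
`H = {x ∈ 2^ω : ∀ i, x↾[nᵢ,nᵢ₊₁) ∈ Cᵢ}` is not in `I₀`. -/
theorem stmt3 (n : ℕ → ℕ) (hn0 : n 0 = 0) (hmono : StrictMono n)
    (C : (i : ℕ) → Set (↥(Set.Ico (n i) (n (i + 1))) → ZMod 2))
    (hC : ∀ i : ℕ, ∀ s : Fin (n i + 1) → (↥(Set.Ico (n i) (n (i + 1))) → ZMod 2),
      (⋂ k : Fin (n i + 1), (fun c => c + s k) '' (C i)).Nonempty ∧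
      (⋂ k : Fin (n i + 1), (fun c => c + s k) '' (C i)ᶜ).Nonempty) :
    ¬ memI0 {x : CantorSp | ∀ i : ℕ, (fun j : ↥(Set.Ico (n i) (n (i + 1))) => x j.1) ∈ C i} := by
  classical
  rintro ⟨f, hf, hcov⟩
  have hnle : ∀ i, i ≤ n i := fun i => hmono.le_apply
  have hnmono : Monotone n := hmono.monotone
  -- difference vectors for each member of the cover
  have key : ∀ m M, ∃ d : CantorSp, (∀ j < M, d j = 0) ∧ ∀ z ∈ f m, z + d ∉ f m := by
    intro m M
    obtain ⟨-, P, hP, hPne, hPd⟩ := hf m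
    exact perfect_diff (f m) P hP hPne hPd M
  choose D hDsupp hDdisj using key
  -- the scale function g
  have hgex : ∀ t : ℕ, ∃ i, 2 ^ (t + 1) ≤ n i + 1 := fun t =>
    ⟨2 ^ (t + 1), by have := hnle (2 ^ (t + 1)); omega⟩
  have hgch : ∃ g : ℕ → ℕ, ∀ t, 2 ^ (t + 1) ≤ n (g t) + 1 :=
    ⟨fun t => Nat.find (hgex t), fun t => Nat.find_spec (hgex t)⟩
  obtain ⟨g, hg⟩ := hgch
  -- the correction vectors
  obtain ⟨d, hd1, hd2, hd3⟩ :
      ∃ d : ℕ → CantorSp,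
        (∀ t, ∀ j < n (Nat.unpair t).2, d t j = 0) ∧
        (∀ t, ∀ j < n (g t), d t j = 0) ∧
        (∀ m N, ∀ z ∈ f m, z + d (Nat.pair m N) ∉ f m) := by
    refine ⟨fun t => D (Nat.unpair t).1 (max (n (Nat.unpair t).2) (n (g t))),
      fun t j hj => hDsupp _ _ j (lt_of_lt_of_le hj (le_max_left _ _)),
      fun t j hj => hDsupp _ _ j (lt_of_lt_of_le hj (le_max_right _ _)), ?_⟩
    intro m N
    simpa only [Nat.unpair_pair] using
      hDdisj m (max (n N) (n (g (Nat.pair m N))))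
  -- construction of the invariant compact subcube Q'
  obtain ⟨Q', hQ'H, hQ'closed, hQ'ne, hQ'd⟩ :
      ∃ Q' : Set CantorSp,
        Q' ⊆ {x : CantorSp | ∀ i : ℕ, (fun j : ↥(Set.Ico (n i) (n (i + 1))) => x j.1) ∈ C i} ∧
        IsClosed Q' ∧ Q'.Nonempty ∧ (∀ t, ∀ x ∈ Q', x + d t ∈ Q') := by
    set L : ℕ → ℕ := fun i => Nat.log 2 (n i + 1) with hL_def
    have hLpow : ∀ i, 2 ^ L i ≤ n i + 1 := fun i => Nat.pow_log_le_self 2 (Nat.succ_ne_zero _)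
    -- block restrictions of the correction vectors
    set e : ℕ → (i : ℕ) → (↥(Set.Ico (n i) (n (i + 1))) → ZMod 2) :=
      fun t i j => d t j.1 with he_def
    have hblock : ∀ t i, e t i ≠ 0 → t < L i := by
      intro t i hne
      have hex : ∃ j : ↥(Set.Ico (n i) (n (i + 1))), d t j.1 ≠ 0 := by
        by_contra h
        push_neg at h
        apply hne
        funext j
        exact h j
      obtain ⟨j, hj⟩ := hex
      have hjge : n (g t) ≤ j.1 := by
        by_contra h
        exact hj (hd2 t j.1 (by omega))
      have hj2 : j.1 < n (i + 1) := (Set.mem_Ico.mp j.2).2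
      have h3 : g t ≤ i := by
        by_contra h
        push_neg at h
        have := hnmono (show i + 1 ≤ g t by omega)
        omega
      have h4 : 2 ^ (t + 1) ≤ n i + 1 := le_trans (hg t) (by have := hnmono h3; omega)
      have h5 : t + 1 ≤ L i := (Nat.le_log_iff_pow_le one_lt_two (Nat.succ_ne_zero _)).mpr h4
      omega
    -- the linear combinations
    set φ : (i : ℕ) → (Fin (L i) → ZMod 2) → (↥(Set.Ico (n i) (n (i + 1))) → ZMod 2) :=
      fun i ε => ∑ t : Fin (L i), ε t • e t.1 i with hφ_def
    have hφadd : ∀ i ε ε', φ i ε + φ i ε' = φ i (ε + ε') := by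
      intro i ε ε'
      simp only [hφ_def]
      rw [← Finset.sum_add_distrib]
      apply Finset.sum_congr rfl
      intro t _
      rw [Pi.add_apply, add_smul]
    have hφzero : ∀ i, φ i 0 = 0 := by
      intro i
      simp [hφ_def]
    have hφsingle : ∀ i (t : ℕ) (ht : t < L i),
        φ i (fun s => if s.1 = t then 1 else 0) = e t i := by
      intro i t ht
      simp only [hφ_def]
      have hstep : ∀ s : Fin (L i), (if s.1 = t then (1 : ZMod 2) else 0) • e s.1 i
          = if s = ⟨t, ht⟩ then e s.1 i else 0 := by
        intro s
        by_cases h : s = ⟨t, ht⟩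
        · subst h
          simp
        · have h' : s.1 ≠ t := fun hh => h (Fin.ext hh)
          simp [h, h']
      rw [Finset.sum_congr rfl (fun s _ => hstep s), Finset.sum_ite_eq']
      simp
    -- the base points
    have hcex : ∀ i, ∃ c : (↥(Set.Ico (n i) (n (i + 1))) → ZMod 2),
        ∀ ε : Fin (L i) → ZMod 2, c + φ i ε ∈ C i := by
      intro i
      have hcard : Fintype.card (Fin (L i) → ZMod 2) = 2 ^ L i := by simp
      set E := Fintype.equivFinOfCardEq hcard with hE
      set s : Fin (n i + 1) → (↥(Set.Ico (n i) (n (i + 1))) → ZMod 2) :=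
        fun k => if h : (k : ℕ) < 2 ^ L i then φ i (E.symm ⟨k, h⟩) else 0 with hs
      obtain ⟨c, hc⟩ := (hC i s).1
      rw [Set.mem_iInter] at hc
      refine ⟨c, fun ε => ?_⟩
      have hk : (E ε : ℕ) < n i + 1 := lt_of_lt_of_le (E ε).2 (hLpow i)
      obtain ⟨a, ha, hac⟩ := hc ⟨(E ε : ℕ), hk⟩
      have hsk : s ⟨(E ε : ℕ), hk⟩ = φ i ε := by
        simp only [hs]
        rw [dif_pos (E ε).2]
        exact congrArg (φ i) (E.symm_apply_apply ε)
      rw [hsk] at hac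
      have hca : c + φ i ε = a := by
        rw [← hac]
        exact fun_add_add a (φ i ε)
      rw [hca]
      exact ha
    choose c hc using hcex
    -- the base point of Q'
    have hblkex : ∀ j : ℕ, ∃ i, j < n (i + 1) := fun j =>
      ⟨j, lt_of_lt_of_le (Nat.lt_succ_self j) (hnle (j + 1))⟩
    set blk : ℕ → ℕ := fun j => Nat.find (hblkex j) with hblk_def
    have hblk1 : ∀ j, j < n (blk j + 1) := fun j => Nat.find_spec (hblkex j)
    have hblk2 : ∀ j, n (blk j) ≤ j := by
      intro j
      rcases Nat.eq_zero_or_pos (blk j) with h | h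
      · rw [h, hn0]
        exact Nat.zero_le j
      · have hmin := Nat.find_min (hblkex j) (show blk j - 1 < blk j by omega)
        push_neg at hmin
        have heq : blk j - 1 + 1 = blk j := by omega
        rwa [heq] at hmin
    have hblkuniq : ∀ i (j : ℕ), n i ≤ j → j < n (i + 1) → blk j = i := by
      intro i j h1 h2
      have hle : blk j ≤ i := Nat.find_min' (hblkex j) h2
      have hge : i ≤ blk j := by
        by_contra h
        push_neg at h
        have h3 : n (blk j + 1) ≤ n i := hnmono (by omega)
        have := hblk1 j
        omega
      omega
    set x₀ : CantorSp := fun j => c (blk j) ⟨j, Set.mem_Ico.mpr ⟨hblk2 j, hblk1 j⟩⟩ with hx₀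
    have hx₀res : ∀ i, (fun j : ↥(Set.Ico (n i) (n (i + 1))) => x₀ j.1) = c i := by
      intro i
      funext j
      obtain ⟨h1, h2⟩ := Set.mem_Ico.mp j.2
      have hbj : blk j.1 = i := hblkuniq i j.1 h1 h2
      have aux : ∀ i' (hii : blk j.1 = i') (hmem : j.1 ∈ Set.Ico (n i') (n (i' + 1))),
          c (blk j.1) ⟨j.1, Set.mem_Ico.mpr ⟨hblk2 j.1, hblk1 j.1⟩⟩ = c i' ⟨j.1, hmem⟩ := by
        intro i' hii hmem
        subst hii
        rfl
      have := aux i hbj j.2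
      simp only [hx₀]
      rw [this]
    -- define Q'
    refine ⟨{x : CantorSp | ∀ i, ∃ ε : Fin (L i) → ZMod 2,
        (fun j : ↥(Set.Ico (n i) (n (i + 1))) => x j.1) = c i + φ i ε}, ?_, ?_, ?_, ?_⟩
    · -- Q' ⊆ H
      intro x hx i
      obtain ⟨ε, hε⟩ := hx i
      show (fun j : ↥(Set.Ico (n i) (n (i + 1))) => x j.1) ∈ C i
      rw [hε]
      exact hc i ε
    · -- closed
      rw [← isOpen_compl_iff, isOpen_iff_forall_mem_open]
      intro x hx
      simp only [Set.mem_compl_iff, Set.mem_setOf_eq, not_forall] at hx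
      obtain ⟨i, hi⟩ := hx
      refine ⟨{y : CantorSp | ∀ j < n (i + 1), y j = x j}, ?_,
        cylinder_open x (n (i + 1)), fun j hj => rfl⟩
      intro y hy
      simp only [Set.mem_compl_iff, Set.mem_setOf_eq, not_forall]
      refine ⟨i, ?_⟩
      have hres : (fun j : ↥(Set.Ico (n i) (n (i + 1))) => y j.1)
          = (fun j : ↥(Set.Ico (n i) (n (i + 1))) => x j.1) := by
        funext j
        exact hy j.1 (Set.mem_Ico.mp j.2).2
      rw [hres]
      exact hi
    · -- nonempty
      refine ⟨x₀, ?_⟩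
      intro i
      refine ⟨0, ?_⟩
      rw [hx₀res i, hφzero i, add_zero]
    · -- invariance
      intro t x hx
      simp only [Set.mem_setOf_eq] at hx ⊢
      intro i
      obtain ⟨ε, hε⟩ := hx i
      have hres : (fun j : ↥(Set.Ico (n i) (n (i + 1))) => (x + d t) j.1)
          = (fun j : ↥(Set.Ico (n i) (n (i + 1))) => x j.1) + e t i := rfl
      by_cases h0 : e t i = 0
      · refine ⟨ε, ?_⟩
        rw [hres, h0, add_zero, hε]
      · have ht := hblock t i h0
        refine ⟨ε + fun s => if s.1 = t then 1 else 0, ?_⟩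
        rw [hres, hε, ← hφsingle i t ht, add_assoc, hφadd]
  -- Part 2 : Baire category argument inside Q'
  obtain ⟨x₀, hx₀Q⟩ := hQ'ne
  haveI hQcomp : CompactSpace Q' := isCompact_iff_compactSpace.mp hQ'closed.isCompact
  haveI : Nonempty Q' := ⟨⟨x₀, hx₀Q⟩⟩
  haveI : LocallyCompactSpace Q' := inferInstance
  haveI : BaireSpace Q' := inferInstance
  letI mQ : MeasurableSpace Q' := borel Q'
  haveI : BorelSpace Q' := ⟨rfl⟩
  set A : ℕ → Set ↥Q' := fun m => Subtype.val ⁻¹' f m with hA_def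
  have hAmeas : ∀ m, MeasurableSet (A m) := fun m =>
    (Continuous.borel_measurable continuous_subtype_val) ((hf m).1)
  have hAcover : (⋃ m, A m) = Set.univ := by
    ext y
    simp only [Set.mem_iUnion, Set.mem_univ, iff_true, hA_def, Set.mem_preimage]
    exact Set.mem_iUnion.mp (hcov (hQ'H y.2))
  have hnm : ∃ m, ¬ IsMeagre (A m) := by
    by_contra h
    push_neg at h
    have hu : IsMeagre (⋃ m, A m) := isMeagre_iUnion h
    rw [hAcover] at hu
    have hdense : Dense ((Set.univ : Set ↥Q')ᶜ) := dense_of_mem_residual hu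
    rw [Set.compl_univ] at hdense
    obtain ⟨y⟩ := ‹Nonempty ↥Q'›
    obtain ⟨z, hz⟩ := hdense.inter_open_nonempty Set.univ isOpen_univ ⟨y, trivial⟩
    exact hz.2
  obtain ⟨m, hm⟩ := hnm
  obtain ⟨u, huop, hueq⟩ := ((hAmeas m).baireMeasurableSet).residualEq_isOpen
  have hW : {y : ↥Q' | y ∈ A m ↔ y ∈ u} ∈ residual ↥Q' := Filter.eventuallyEq_set.mp hueq
  have hdiffAu : IsMeagre (A m \ u) := by
    rw [IsMeagre]
    apply Filter.mem_of_superset hW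
    intro y hy
    simp only [Set.mem_setOf_eq] at hy
    simp only [Set.mem_compl_iff, Set.mem_diff, not_and, not_not]
    exact fun hA => hy.mp hA
  have hdiffuA : IsMeagre (u \ A m) := by
    rw [IsMeagre]
    apply Filter.mem_of_superset hW
    intro y hy
    simp only [Set.mem_setOf_eq] at hy
    simp only [Set.mem_compl_iff, Set.mem_diff, not_and, not_not]
    exact fun hu' => hy.mpr hu'
  have hune : u.Nonempty := by
    rcases Set.eq_empty_or_nonempty u with h | h
    · exfalso
      apply hm
      rwa [h, Set.diff_empty] at hdiffAu
    · exact h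
  obtain ⟨q, hq⟩ := hune
  obtain ⟨w, hwop, hw⟩ := isOpen_induced_iff.mp huop
  have hqw : (q : CantorSp) ∈ w := by
    rw [← hw] at hq
    exact hq
  obtain ⟨I, V, hIV, hpi⟩ := isOpen_pi_iff.mp hwop _ hqw
  set N : ℕ := I.sup id + 1 with hN
  have hcyl : {y : CantorSp | ∀ j < n N, y j = (q : CantorSp) j} ⊆ w := by
    intro y hy
    apply hpi
    rw [Set.mem_pi]
    intro j hj
    have hj' : j ∈ I := hj
    have hjN : j < n N := by
      have h1 : j ≤ I.sup id := Finset.le_sup (f := id) hj'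
      have := hnle N
      omega
    rw [Set.mem_setOf_eq] at hy
    rw [hy j hjN]
    exact (hIV j hj').2
  set U : Set ↥Q' := Subtype.val ⁻¹' {y : CantorSp | ∀ j < n N, y j = (q : CantorSp) j}
    with hU
  have hUop : IsOpen U := (cylinder_open q.val (n N)).preimage continuous_subtype_val
  have hUu : U ⊆ u := by
    rw [← hw]
    exact fun y hy => hcyl hy
  have hqU : q ∈ U := fun j _ => rfl
  -- the translation
  set t0 : ℕ := Nat.pair m N with ht0
  have hdsupp0 : ∀ j < n N, d t0 j = 0 := by
    intro j hj
    have := hd1 t0 j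
    rw [ht0, Nat.unpair_pair] at this
    exact this hj
  have hddisj0 : ∀ z ∈ f m, z + d t0 ∉ f m := by
    rw [ht0]
    exact hd3 m N
  set T : ↥Q' → ↥Q' := fun y => ⟨y.val + d t0, hQ'd t0 y.val y.2⟩ with hT
  have hTT : ∀ y, T (T y) = y := by
    intro y
    apply Subtype.ext
    show y.val + d t0 + d t0 = y.val
    exact fun_add_add _ _
  have hTcont : Continuous T := by
    refine Continuous.subtype_mk ?_ _
    refine continuous_pi fun j => ?_
    have h1 : Continuous fun y : ↥Q' => (y : CantorSp) j :=
      (continuous_apply j).comp continuous_subtype_val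
    show Continuous fun y : ↥Q' => (y : CantorSp) j + d t0 j
    exact Continuous.comp (continuous_of_discreteTopology (f := fun a : ZMod 2 => a + d t0 j)) h1
  have hTopen : IsOpenMap T := by
    intro s hs
    have himg : T '' s = T ⁻¹' s := by
      ext y
      constructor
      · rintro ⟨z, hz, rfl⟩
        show T (T z) ∈ s
        rw [hTT]
        exact hz
      · intro hy
        exact ⟨T y, hy, hTT y⟩
    rw [himg]
    exact hs.preimage hTcont
  have hTval : ∀ (y : ↥Q') (j : ℕ), j < n N → (T y : CantorSp) j = (y : CantorSp) j := by
    intro y j hj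
    show (y : CantorSp) j + d t0 j = (y : CantorSp) j
    rw [hdsupp0 j hj, add_zero]
  have hTU : T ⁻¹' U = U := by
    ext y
    constructor
    · intro h
      have h' : ∀ j < n N, (T y : CantorSp) j = (q : CantorSp) j := h
      show ∀ j < n N, (y : CantorSp) j = (q : CantorSp) j
      intro j hj
      have h2 := h' j hj
      rw [hTval y j hj] at h2
      exact h2
    · intro h
      have h' : ∀ j < n N, (y : CantorSp) j = (q : CantorSp) j := h
      show ∀ j < n N, (T y : CantorSp) j = (q : CantorSp) j
      intro j hj
      rw [hTval y j hj]
      exact h' j hj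
  have hM1 : IsMeagre (U \ A m) := hdiffuA.mono (Set.diff_subset_diff_left hUu)
  have hM2 : IsMeagre (U \ T ⁻¹' A m) := by
    have heq : U \ T ⁻¹' A m = T ⁻¹' (U \ A m) := by
      rw [Set.preimage_diff, hTU]
    rw [heq]
    exact hM1.preimage_of_isOpenMap hTcont hTopen
  have hint : (U ∩ (A m ∩ T ⁻¹' A m)).Nonempty := by
    by_contra h
    rw [Set.not_nonempty_iff_eq_empty] at h
    have hUsub : U ⊆ (U \ A m) ∪ (U \ T ⁻¹' A m) := by
      intro y hy
      by_cases h1 : y ∈ A m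
      · by_cases h2 : y ∈ T ⁻¹' A m
        · exfalso
          have : y ∈ U ∩ (A m ∩ T ⁻¹' A m) := ⟨hy, h1, h2⟩
          rw [h] at this
          exact this
        · exact Or.inr ⟨hy, h2⟩
      · exact Or.inl ⟨hy, h1⟩
    have hunion : IsMeagre ((U \ A m) ∪ (U \ T ⁻¹' A m)) := by
      rw [IsMeagre, Set.compl_union]
      exact Filter.inter_mem hM1 hM2
    have hUm : IsMeagre U := hunion.mono hUsub
    have hdense : Dense Uᶜ := dense_of_mem_residual hUm
    obtain ⟨z, hz1, hz2⟩ := hdense.inter_open_nonempty U hUop ⟨q, hqU⟩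
    exact hz2 hz1
  obtain ⟨y, hyU, hyA, hyT⟩ := hint
  exact hddisj0 y.val hyA hyT
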